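/- arXiv:2405.16397 — 2 statements merged into one kernel-verified Lean document; each statement's English description precedes it below -/
import Mathlib

section
/- Let J : ℝ^d → ℝ be twice continuously differentiable and suppose there exist constants 0 < a ≤ b such that a·I ≼ ∇²J(θ) ≼ b·I (in the Loewner order) for all θ ∈ ℝ^d. Let F be a symmetric d×d real matrix with a·I ≼ F ≼ b·I, and for θ ∈ ℝ^d set Δθ = F⁻¹ ∇J(θ). Then the update with step size a/b strictly decreases J proportionally to the squared gradient norm: J(θ − (a/b)·Δθ) − J(θ) ≤ −(a/(2b²))·‖∇J(θ)‖₂². -/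
open scoped RealInnerProductSpace Matrix

lemma descent_lemma {E : Type*} [NormedAddCommGroup E] [InnerProductSpace ℝ E] [CompleteSpace E]
    {J : E → ℝ} (hJ : ContDiff ℝ 2 J) {b : ℝ}
    (hb : ∀ θ v : E, ⟪fderiv ℝ (gradient J) θ v, v⟫ ≤ b * ‖v‖ ^ 2)
    (x v : E) : J (x + v) ≤ J x + ⟪gradient J x, v⟫ + b / 2 * ‖v‖ ^ 2 := by
  have hJd : Differentiable ℝ J := hJ.differentiable (by norm_num)
  have hg : ContDiff ℝ 1 (gradient J) := by
    have h1 : ContDiff ℝ 1 (fderiv ℝ J) := hJ.fderiv_right (by norm_num)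
    exact ((InnerProductSpace.toDual ℝ E).symm.contDiff.comp h1 : _)
  have hgd : Differentiable ℝ (gradient J) := hg.differentiable (by norm_num)
  set g := gradient J with hgdef
  have hc : ∀ t : ℝ, HasDerivAt (fun t : ℝ => x + t • v) v t := by
    intro t
    simpa using ((hasDerivAt_id t).smul_const v).const_add x
  have hφ : ∀ t : ℝ, HasDerivAt (fun t : ℝ => J (x + t • v)) ⟪g (x + t • v), v⟫ t := by
    intro t
    have h1 : HasGradientAt J (g (x + t • v)) (x + t • v) := (hJd _).hasGradientAt
    have h2 := hasGradientAt_iff_hasFDerivAt.mp h1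
    simpa [InnerProductSpace.toDual_apply_apply, Function.comp_def] using h2.comp_hasDerivAt t (hc t)
  have hh : ∀ t : ℝ, HasDerivAt (fun t : ℝ => ⟪v, g (x + t • v)⟫)
      ⟪fderiv ℝ g (x + t • v) v, v⟫ t := by
    intro t
    have h2 : HasDerivAt (fun t : ℝ => g (x + t • v)) (fderiv ℝ g (x + t • v) v) t :=
      (hgd _).hasFDerivAt.comp_hasDerivAt t (hc t)
    have h3 := ((innerSL ℝ v).hasFDerivAt).comp_hasDerivAt t h2
    simpa [real_inner_comm, Function.comp_def] using h3
  -- Step A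
  have stepA : ∀ t : ℝ, 0 ≤ t → ⟪v, g (x + t • v)⟫ - ⟪v, g x⟫ ≤ b * ‖v‖ ^ 2 * t := by
    intro t ht
    set k : ℝ → ℝ := fun t => b * ‖v‖ ^ 2 * t - ⟪v, g (x + t • v)⟫ with hk
    have hk' : ∀ s : ℝ, HasDerivAt k (b * ‖v‖ ^ 2 - ⟪fderiv ℝ g (x + s • v) v, v⟫) s := by
      intro s
      have := ((hasDerivAt_id s).const_mul (b * ‖v‖ ^ 2)).sub (hh s)
      simpa [Pi.sub_def] using this
    have hmono : Monotone k := by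
      refine monotone_of_deriv_nonneg (fun s => (hk' s).differentiableAt) (fun s => ?_)
      rw [(hk' s).deriv]
      have := hb (x + s • v) v
      linarith
    have := hmono ht
    simp only [hk] at this
    simp only [zero_smul, add_zero, mul_zero] at this
    linarith
  -- Step B
  set ψ : ℝ → ℝ := fun t => J (x + t • v) - J x - t * ⟪g x, v⟫ - b / 2 * ‖v‖ ^ 2 * t ^ 2 with hψdef
  have hψ : ∀ t : ℝ, HasDerivAt ψ
      (⟪g (x + t • v), v⟫ - ⟪g x, v⟫ - b * ‖v‖ ^ 2 * t) t := by
    intro t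
    have h1 := (((hφ t).sub_const (J x)).sub ((hasDerivAt_id t).mul_const ⟪g x, v⟫)).sub
      ((hasDerivAt_pow 2 t).const_mul (b / 2 * ‖v‖ ^ 2))
    have h1' : HasDerivAt ψ (⟪g (x + t • v), v⟫ - ⟪g x, v⟫ - b / 2 * ‖v‖ ^ 2 * (2 * t)) t := by
      simpa [hψdef, Pi.sub_def] using h1
    have he : b * ‖v‖ ^ 2 * t = b / 2 * ‖v‖ ^ 2 * (2 * t) := by ring
    rw [he]; exact h1'
  have hanti : AntitoneOn ψ (Set.Ici (0 : ℝ)) := by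
    refine antitoneOn_of_deriv_nonpos (convex_Ici 0)
      (Differentiable.continuous (fun t => (hψ t).differentiableAt)).continuousOn
      (Differentiable.differentiableOn (fun t => (hψ t).differentiableAt)) ?_
    intro t ht
    rw [interior_Ici] at ht
    rw [(hψ t).deriv]
    have hA := stepA t (le_of_lt ht)
    have : ⟪g (x + t • v), v⟫ - ⟪g x, v⟫ ≤ b * ‖v‖ ^ 2 * t := by
      rw [real_inner_comm v (g (x + t • v)), real_inner_comm v (g x)]
      exact hA
    linarith
  have h01 := hanti (Set.self_mem_Ici) (Set.mem_Ici.mpr zero_le_one) zero_le_one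
  simp only [hψdef, zero_smul, add_zero, one_smul, zero_mul, mul_zero, sub_zero, one_pow, mul_one,
    zero_pow, sub_self] at h01
  linarith

open Matrix in
lemma mat_key {n : Type*} [Fintype n] [DecidableEq n] {F : Matrix n n ℝ} {a b : ℝ}
    (ha : 0 < a) (hFsymm : F.IsSymm)
    (hFa : (F - a • (1 : Matrix n n ℝ)).PosSemidef)
    (hFb : ((b • (1 : Matrix n n ℝ)) - F).PosSemidef) :
    IsUnit F.det ∧ ∀ u : n → ℝ,
      a * (u ⬝ᵥ u) ≤ u ⬝ᵥ (F *ᵥ u) ∧ (F *ᵥ u) ⬝ᵥ (F *ᵥ u) ≤ b * (u ⬝ᵥ (F *ᵥ u)) := by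
  have hFH : F.IsHermitian := by
    have h : Fᴴ = Fᵀ := by ext i j; simp [Matrix.conjTranspose_apply]
    exact h.trans hFsymm
  have lower : ∀ u : n → ℝ, a * (u ⬝ᵥ u) ≤ u ⬝ᵥ (F *ᵥ u) := by
    intro u
    have h := hFa.dotProduct_mulVec_nonneg u
    simp only [star_trivial, Matrix.sub_mulVec, Matrix.smul_mulVec, Matrix.one_mulVec,
      dotProduct_sub, dotProduct_smul, smul_eq_mul] at h
    linarith [h]
  have dotself_nonneg : ∀ u : n → ℝ, 0 ≤ u ⬝ᵥ u := fun u =>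
    Finset.sum_nonneg fun i _ => mul_self_nonneg (u i)
  have hPD : F.PosDef := by
    refine Matrix.PosDef.of_dotProduct_mulVec_pos hFH (fun x hx => ?_)
    have h1 : x ⬝ᵥ x ≠ 0 := fun h => hx (dotProduct_self_eq_zero.mp h)
    have h2 : 0 < x ⬝ᵥ x := lt_of_le_of_ne (dotself_nonneg x) (Ne.symm h1)
    calc (0:ℝ) < a * (x ⬝ᵥ x) := mul_pos ha h2
      _ ≤ x ⬝ᵥ (F *ᵥ x) := lower x
      _ = star x ⬝ᵥ (F *ᵥ x) := by rw [star_trivial]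
  refine ⟨hPD.det_pos.ne'.isUnit, fun u => ⟨lower u, ?_⟩⟩
  -- upper bound via square root
  have hF0 : F.PosSemidef := hPD.posSemidef
  open scoped MatrixOrder in set S := CFC.sqrt F with hS
  have hSH : Sᴴ = S := open scoped MatrixOrder in (CFC.sqrt_nonneg F).posSemidef.1
  have hSS : S * S = F := open scoped MatrixOrder in CFC.sqrt_mul_sqrt_self F hF0.nonneg
  have key : (S * ((b • (1 : Matrix n n ℝ)) - F) * Sᴴ).PosSemidef :=
    hFb.mul_mul_conjTranspose_same S
  have hEq : S * ((b • (1 : Matrix n n ℝ)) - F) * Sᴴ = b • F - F * F := by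
    rw [hSH, Matrix.mul_sub, Matrix.sub_mul, Matrix.mul_smul, Matrix.mul_one,
      Matrix.smul_mul, hSS]
    congr 1
    calc S * F * S = S * (S * S) * S := by rw [hSS]
      _ = (S * S) * (S * S) := by noncomm_ring
      _ = F * F := by rw [hSS]
  have h := key.dotProduct_mulVec_nonneg u
  rw [hEq] at h
  simp only [star_trivial, Matrix.sub_mulVec, Matrix.smul_mulVec,
    dotProduct_sub, dotProduct_smul, smul_eq_mul] at h
  have hFF : u ⬝ᵥ ((F * F) *ᵥ u) = (F *ᵥ u) ⬝ᵥ (F *ᵥ u) := by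
    rw [← Matrix.mulVec_mulVec, Matrix.dotProduct_mulVec]
    congr 1
    rw [← Matrix.mulVec_transpose, hFsymm.eq]
  rw [hFF] at h
  linarith

/-- Descent guarantee for the preconditioned Newton-type update with
step size `a/b`, for a twice continuously differentiable objective `J` whose Hessian
satisfies the Loewner bounds `a•I ≼ ∇²J(θ) ≼ b•I`, and a symmetric preconditioner `F`
with `a•I ≼ F ≼ b•I`. -/
theorem stmt_0 (d : ℕ) (J : EuclideanSpace ℝ (Fin d) → ℝ) (a b : ℝ)
    (ha : 0 < a) (hab : a ≤ b)
    (hJ : ContDiff ℝ 2 J)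
    (hHess : ∀ θ v : EuclideanSpace ℝ (Fin d),
      a * ‖v‖ ^ 2 ≤ ⟪fderiv ℝ (gradient J) θ v, v⟫ ∧
        ⟪fderiv ℝ (gradient J) θ v, v⟫ ≤ b * ‖v‖ ^ 2)
    (F : Matrix (Fin d) (Fin d) ℝ) (hFsymm : F.IsSymm)
    (hFa : (F - a • (1 : Matrix (Fin d) (Fin d) ℝ)).PosSemidef)
    (hFb : ((b • (1 : Matrix (Fin d) (Fin d) ℝ)) - F).PosSemidef)
    (θ Δθ : EuclideanSpace ℝ (Fin d))
    (hΔθ : Δθ = Matrix.toEuclideanLin F⁻¹ (gradient J θ)) :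
    J (θ - (a / b) • Δθ) - J θ ≤ -(a / (2 * b ^ 2)) * ‖gradient J θ‖ ^ 2 := by
  have hb0 : (0:ℝ) < b := lt_of_lt_of_le ha hab
  obtain ⟨hdet, hkey⟩ := mat_key ha hFsymm hFa hFb
  set g := gradient J θ with hg
  set u : Fin d → ℝ := WithLp.equiv 2 (Fin d → ℝ) Δθ with hu
  -- F *ᵥ u recovers the gradient
  have hFu : F *ᵥ u = WithLp.equiv 2 (Fin d → ℝ) g := by
    rw [hu, hΔθ, Matrix.toEuclideanLin_apply]
    simp [Matrix.mulVec_mulVec, Matrix.mul_nonsing_inv _ hdet]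
  -- bridge between inner products and dot products
  have hinner : ∀ x y : EuclideanSpace ℝ (Fin d),
      ⟪x, y⟫ = (WithLp.equiv 2 (Fin d → ℝ) x) ⬝ᵥ (WithLp.equiv 2 (Fin d → ℝ) y) := by
    intro x y
    simp [PiLp.inner_apply, RCLike.inner_apply, dotProduct, conj_trivial, mul_comm]
  obtain ⟨hk1, hk2⟩ := hkey u
  set T : ℝ := ⟪g, Δθ⟫ with hT
  set N : ℝ := ‖Δθ‖ ^ 2 with hN
  set G : ℝ := ‖g‖ ^ 2 with hG
  have hTdot : T = u ⬝ᵥ (F *ᵥ u) := by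
    rw [hT, hinner, hFu, dotProduct_comm]
  have hNdot : N = u ⬝ᵥ u := by
    rw [hN, ← real_inner_self_eq_norm_sq, hinner]
  have hGdot : G = (F *ᵥ u) ⬝ᵥ (F *ᵥ u) := by
    rw [hG, ← real_inner_self_eq_norm_sq, hinner, hFu]
  have hA : a * N ≤ T := by rw [hTdot, hNdot]; exact hk1
  have hB : G ≤ b * T := by rw [hTdot, hGdot]; exact hk2
  -- descent lemma
  have hdesc := descent_lemma hJ (fun θ' v => (hHess θ' v).2) θ (-((a / b) • Δθ))
  have hpt : θ + -((a / b) • Δθ) = θ - (a / b) • Δθ := by rw [sub_eq_add_neg]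
  have hin : ⟪gradient J θ, -((a / b) • Δθ)⟫ = -((a / b) * T) := by
    rw [inner_neg_right, real_inner_smul_right, ← hg, ← hT]
  have hnm : ‖-((a / b) • Δθ)‖ ^ 2 = (a / b) ^ 2 * N := by
    rw [norm_neg, norm_smul, mul_pow, hN, Real.norm_eq_abs, sq_abs]
  rw [hpt, hin, hnm] at hdesc
  -- combine
  have hT0 : 0 ≤ T := le_trans (by positivity) hA
  have step2 : b / 2 * ((a / b) ^ 2 * N) ≤ a / (2 * b) * T := by
    have e : b / 2 * ((a / b) ^ 2 * N) = (a * (a * N)) / (2 * b) := by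
      field_simp
    have e' : a / (2 * b) * T = (a * T) / (2 * b) := by ring
    rw [e, e']
    gcongr
  have step3 : a / (2 * b ^ 2) * G ≤ a / (2 * b) * T := by
    have e : a / (2 * b ^ 2) * (b * T) = a / (2 * b) * T := by
      field_simp
    calc a / (2 * b ^ 2) * G ≤ a / (2 * b ^ 2) * (b * T) :=
          mul_le_mul_of_nonneg_left hB (by positivity)
      _ = a / (2 * b) * T := e
  have step4 : a / b * T = a / (2 * b) * T + a / (2 * b) * T := by ring
  linarith [hdesc, step2, step3, step4]
end

section
/- Let J : ℝ^d → ℝ be convex and differentiable with L-Lipschitz gradient (‖∇J(θ) − ∇J(θ')‖₂ ≤ L‖θ − θ'‖₂ for all θ, θ'), attaining a minimizer θ*. Let F be a symmetric positive definite d×d matrix with smallest eigenvalue λ_min(F), and consider the preconditioned gradient iteration θ^{(k+1)} = θ^{(k)} − α F⁻¹ ∇J(θ^{(k)}) with fixed step size 0 < α ≤ λ_min(F)/L. Then for every k ≥ 1, J(θ^{(k)}) − J(θ*) ≤ (θ^{(0)} − θ*)ᵀ F (θ^{(0)} − θ*) / (2αk). -/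
open scoped RealInnerProductSpace

section Aux

variable {E : Type*} [NormedAddCommGroup E] [InnerProductSpace ℝ E] [CompleteSpace E]

lemma aux_dirDeriv (J : E → ℝ) (hdiff : Differentiable ℝ J) (x v : E) (t : ℝ) :
    HasDerivAt (fun s : ℝ => J (x + s • v)) ⟪gradient J (x + t • v), v⟫ t := by
  have hg : HasGradientAt J (gradient J (x + t • v)) (x + t • v) :=
    (hdiff (x + t • v)).hasGradientAt
  have hf := hasGradientAt_iff_hasFDerivAt.mp hg
  have hc : HasDerivAt (fun s : ℝ => x + s • v) v t := by
    simpa using ((hasDerivAt_id t).smul_const v).const_add x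
  have hres := hf.comp_hasDerivAt t hc
  simp [InnerProductSpace.toDual_apply_apply] at hres ⊢
  exact hres

lemma aux_convex_lb (J : E → ℝ) (hconv : ConvexOn ℝ Set.univ J)
    (hdiff : Differentiable ℝ J) (x y : E) :
    J x + ⟪gradient J x, y - x⟫ ≤ J y := by
  have hφ : ∀ t : ℝ, HasDerivAt (fun s : ℝ => J (x + s • (y - x)))
      ⟪gradient J (x + t • (y - x)), y - x⟫ t := aux_dirDeriv J hdiff x (y - x)
  have hcv : ConvexOn ℝ Set.univ (fun t : ℝ => J (x + t • (y - x))) := by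
    have h := hconv.comp_affineMap (AffineMap.lineMap x y : ℝ →ᵃ[ℝ] E)
    have he : ((AffineMap.lineMap x y : ℝ →ᵃ[ℝ] E) ⁻¹' Set.univ) = Set.univ := by simp
    rw [he] at h
    rw [show (fun t : ℝ => J (x + t • (y - x))) = J ∘ (AffineMap.lineMap x y : ℝ →ᵃ[ℝ] E) from ?_]
    · exact h
    funext t
    simp [AffineMap.lineMap_apply, add_comm]
  have h01 := hcv.le_slope_of_hasDerivAt (Set.mem_univ (0 : ℝ)) (Set.mem_univ (1 : ℝ))
    one_pos (hφ 0)
  rw [slope_def_field] at h01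
  simp only [zero_smul, add_zero, one_smul, sub_zero, div_one] at h01
  have hxy : x + (y - x) = y := by abel
  rw [hxy] at h01
  linarith

lemma aux_descent (J : E → ℝ) (hdiff : Differentiable ℝ J) (L : ℝ)
    (hlip : ∀ x y : E, ‖gradient J x - gradient J y‖ ≤ L * ‖x - y‖) (x v : E) :
    J (x + v) ≤ J x + ⟪gradient J x, v⟫ + L / 2 * ‖v‖ ^ 2 := by
  set c : ℝ := ⟪gradient J x, v⟫ with hc
  set C : ℝ := L * ‖v‖ ^ 2 with hC
  set m : ℝ → ℝ := fun t => J x + t * c + C * t ^ 2 / 2 - J (x + t • v) with hm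
  have hder : ∀ t : ℝ, HasDerivAt m (c + C * t - ⟪gradient J (x + t • v), v⟫) t := by
    intro t
    have h1 := aux_dirDeriv J hdiff x v t
    have h2 : HasDerivAt (fun t : ℝ => J x + t * c + C * t ^ 2 / 2) (c + C * t) t := by
      have ha : HasDerivAt (fun t : ℝ => t * c) c t := hasDerivAt_mul_const c
      have hb : HasDerivAt (fun t : ℝ => C * t ^ 2 / 2) (C * (2 * t ^ 1) / 2) t :=
        ((hasDerivAt_pow 2 t).const_mul C).div_const 2
      have hab := (ha.const_add (J x)).add hb
      rw [show c + C * t = c + C * (2 * t ^ 1) / 2 by ring]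
      exact hab
    exact h2.sub h1
  have hmono : MonotoneOn m (Set.Ici (0 : ℝ)) := by
    apply monotoneOn_of_deriv_nonneg (convex_Ici 0)
    · exact (Differentiable.continuous (fun t => (hder t).differentiableAt)).continuousOn
    · exact fun t _ => (hder t).differentiableAt.differentiableWithinAt
    · intro t ht
      rw [interior_Ici] at ht
      have ht0 : (0 : ℝ) < t := ht
      rw [(hder t).deriv]
      have hsub : ⟪gradient J (x + t • v) - gradient J x, v⟫ ≤ C * t := by
        calc ⟪gradient J (x + t • v) - gradient J x, v⟫
            ≤ ‖gradient J (x + t • v) - gradient J x‖ * ‖v‖ := real_inner_le_norm _ _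
          _ ≤ (L * ‖x + t • v - x‖) * ‖v‖ := by
              have hl := hlip (x + t • v) x
              have hv0 : (0 : ℝ) ≤ ‖v‖ := norm_nonneg v
              exact mul_le_mul_of_nonneg_right hl hv0
          _ = C * t := by
              have he : x + t • v - x = t • v := by abel
              rw [he, norm_smul, Real.norm_eq_abs, abs_of_pos ht0, hC]
              ring
      rw [inner_sub_left] at hsub
      linarith
  have h01 := hmono Set.self_mem_Ici (by norm_num : (1 : ℝ) ∈ Set.Ici (0 : ℝ)) zero_le_one
  have hm0 : m 0 = 0 := by simp [hm]
  have hm1 : m 1 = J x + c + C / 2 - J (x + v) := by simp [hm]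
  rw [hm0, hm1] at h01
  rw [hc, hC] at h01
  linarith

end Aux

lemma aux_rayleigh {E : Type*} [NormedAddCommGroup E] [InnerProductSpace ℝ E]
    [FiniteDimensional ℝ E] {T : E →ₗ[ℝ] E} (hT : T.IsSymmetric) {n : ℕ}
    (hn : Module.finrank ℝ E = n) {c : ℝ} (hc : ∀ i, c ≤ hT.eigenvalues hn i) (v : E) :
    c * ‖v‖ ^ 2 ≤ ⟪v, T v⟫ := by
  set B := hT.eigenvectorBasis hn with hB
  have hinner : ∀ w w' : E, ⟪w, w'⟫ = ∑ i, B.repr w i * B.repr w' i := by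
    intro w w'
    rw [← B.repr.inner_map_map w w', PiLp.inner_apply]
    simp [RCLike.inner_apply]
    exact Finset.sum_congr rfl fun i _ => mul_comm _ _
  have h1 : ⟪v, T v⟫ = ∑ i, hT.eigenvalues hn i * (B.repr v i) ^ 2 := by
    rw [hinner]
    refine Finset.sum_congr rfl fun i _ => ?_
    rw [hT.eigenvectorBasis_apply_self_apply hn v i]
    simp only [RCLike.ofReal_real_eq_id, id_eq]
    ring
  have h2 : ‖v‖ ^ 2 = ∑ i, (B.repr v i) ^ 2 := by
    rw [← real_inner_self_eq_norm_sq, hinner]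
    refine Finset.sum_congr rfl fun i _ => ?_
    ring
  rw [h1, h2, Finset.mul_sum]
  refine Finset.sum_le_sum fun i _ => ?_
  nlinarith [hc i, sq_nonneg (B.repr v i)]

set_option maxHeartbeats 1000000 in
/-- O(1/k) convergence of the preconditioned gradient iteration
`θ^{k+1} = θ^k − α F⁻¹ ∇J(θ^k)` for a convex objective with `L`-Lipschitz gradient,
with fixed step size `0 < α ≤ λ_min(F)/L`. -/
theorem stmt_2 (d : ℕ) (hd : 0 < d) (J : EuclideanSpace ℝ (Fin d) → ℝ) (L : ℝ) (hL : 0 < L)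
    (hconv : ConvexOn ℝ Set.univ J) (hdiff : Differentiable ℝ J)
    (hlip : ∀ x y : EuclideanSpace ℝ (Fin d),
      ‖gradient J x - gradient J y‖ ≤ L * ‖x - y‖)
    (θstar : EuclideanSpace ℝ (Fin d)) (hmin : ∀ x, J θstar ≤ J x)
    (F : Matrix (Fin d) (Fin d) ℝ) (hF : F.PosDef)
    (lmin : ℝ)
    (hlmin : lmin = Finset.univ.inf'
      (⟨⟨0, hd⟩, Finset.mem_univ _⟩ : (Finset.univ : Finset (Fin d)).Nonempty)
      hF.1.eigenvalues)
    (α : ℝ) (hα0 : 0 < α) (hα : α ≤ lmin / L)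
    (θ : ℕ → EuclideanSpace ℝ (Fin d))
    (hiter : ∀ k, θ (k + 1) = θ k - α • Matrix.toEuclideanLin F⁻¹ (gradient J (θ k))) :
    ∀ k : ℕ, 1 ≤ k →
      J (θ k) - J θstar ≤
        ⟪θ 0 - θstar, Matrix.toEuclideanLin F (θ 0 - θstar)⟫ / (2 * α * k) := by
  set T : EuclideanSpace ℝ (Fin d) →ₗ[ℝ] EuclideanSpace ℝ (Fin d) := Matrix.toEuclideanLin F
    with hT
  set S : EuclideanSpace ℝ (Fin d) →ₗ[ℝ] EuclideanSpace ℝ (Fin d) := Matrix.toEuclideanLin F⁻¹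
    with hS
  have hsym : T.IsSymmetric := Matrix.isHermitian_iff_isSymmetric.mp hF.1
  have hlmin_pos : 0 < lmin := by
    rw [hlmin]
    exact (Finset.lt_inf'_iff _).2 fun i _ => hF.eigenvalues_pos i
  have hc : ∀ i, lmin ≤ hsym.eigenvalues finrank_euclideanSpace i := by
    intro i
    have heq : hsym.eigenvalues finrank_euclideanSpace i =
        hF.1.eigenvalues ((Fintype.equivOfCardEq (Fintype.card_fin _)) i) := by
      simp [Matrix.IsHermitian.eigenvalues, Matrix.IsHermitian.eigenvalues₀,
        Equiv.symm_apply_apply]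
    rw [heq, hlmin]
    exact Finset.inf'_le _ (Finset.mem_univ _)
  have hray : ∀ v, lmin * ‖v‖ ^ 2 ≤ ⟪v, T v⟫ :=
    fun v => aux_rayleigh hsym finrank_euclideanSpace hc v
  have hTpos : ∀ v, 0 ≤ ⟪v, T v⟫ := fun v => le_trans (by positivity) (hray v)
  have hdet : IsUnit F.det := isUnit_iff_ne_zero.mpr hF.det_pos.ne'
  have hTS : ∀ v, T (S v) = v := by
    intro v
    have h1 : Matrix.toEuclideanLin (F * F⁻¹) = T.comp S := by
      rw [hT, hS]
      simp only [Matrix.toEuclideanLin_eq_toLin]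
      exact Matrix.toLin_mul _ _ _ F F⁻¹
    have h2 : Matrix.toEuclideanLin (F * F⁻¹) v = v := by
      rw [Matrix.mul_nonsing_inv F hdet]
      simp [Matrix.toEuclideanLin_eq_toLin]
    calc T (S v) = (T.comp S) v := rfl
      _ = v := by rw [← h1]; exact h2
  set g : ℕ → EuclideanSpace ℝ (Fin d) := fun k => gradient J (θ k) with hg
  set h : ℕ → EuclideanSpace ℝ (Fin d) := fun k => S (g k) with hh
  have hstep : ∀ k, θ (k + 1) = θ k + (-α) • h k := by
    intro k
    rw [hiter k]
    rw [sub_eq_add_neg, neg_smul]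
  have hTh : ∀ k, T (h k) = g k := fun k => hTS (g k)
  have hgh : ∀ k, lmin * ‖h k‖ ^ 2 ≤ ⟪g k, h k⟫ := by
    intro k
    calc lmin * ‖h k‖ ^ 2 ≤ ⟪h k, T (h k)⟫ := hray (h k)
      _ = ⟪T (h k), h k⟫ := real_inner_comm _ _
      _ = ⟪g k, h k⟫ := by rw [hTh k]
  have hgh_nonneg : ∀ k, 0 ≤ ⟪g k, h k⟫ := fun k => le_trans (by positivity) (hgh k)
  have hA : ∀ k, J (θ (k + 1)) ≤ J (θ k) - α / 2 * ⟪g k, h k⟫ := by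
    intro k
    have hdes := aux_descent J hdiff L hlip (θ k) ((-α) • h k)
    rw [← hstep k] at hdes
    have e1 : ⟪g k, (-α) • h k⟫ = -α * ⟪g k, h k⟫ := real_inner_smul_right _ _ _
    have e2 : ‖(-α) • h k‖ ^ 2 = α ^ 2 * ‖h k‖ ^ 2 := by
      rw [norm_smul, Real.norm_eq_abs, abs_neg, abs_of_pos hα0]
      ring
    rw [e1, e2] at hdes
    have hkey : L / 2 * (α ^ 2 * ‖h k‖ ^ 2) ≤ α / 2 * ⟪g k, h k⟫ := by
      have h1 := hgh k
      have hLα : L * α ≤ lmin := by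
        have h2 := (le_div_iff₀ hL).mp hα
        nlinarith
      nlinarith [sq_nonneg ‖h k‖, hα0.le]
    linarith
  have hmono : ∀ k, J (θ (k + 1)) ≤ J (θ k) := by
    intro k
    have h1 := hA k
    have h2 := hgh_nonneg k
    nlinarith [hα0.le]
  set D : ℕ → ℝ := fun k => ⟪θ k - θstar, T (θ k - θstar)⟫ with hD
  have hDnonneg : ∀ k, 0 ≤ D k := fun k => hTpos _
  have hB : ∀ k, J (θ (k + 1)) - J θstar ≤ (D k - D (k + 1)) / (2 * α) := by
    intro k
    have e1 : ⟪h k, T (θ k - θstar)⟫ = ⟪g k, θ k - θstar⟫ := by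
      rw [← hsym (h k) (θ k - θstar), hTh k]
    have e2 : ⟪θ k - θstar, T (h k)⟫ = ⟪g k, θ k - θstar⟫ := by
      rw [hTh k]
      exact real_inner_comm _ _
    have e3 : ⟪h k, T (h k)⟫ = ⟪g k, h k⟫ := by
      rw [hTh k]
      exact real_inner_comm _ _
    have hexp : D (k + 1) = D k - 2 * α * ⟪g k, θ k - θstar⟫ + α ^ 2 * ⟪g k, h k⟫ := by
      have hθ : θ (k + 1) - θstar = (θ k - θstar) + (-α) • h k := by
        rw [hstep k]; abel
      simp only [hD, hθ, map_add, map_smul, inner_add_left, inner_add_right,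
        real_inner_smul_left, real_inner_smul_right]
      rw [e1, e2, e3]
      ring
    have hcvx : J (θ k) - J θstar ≤ ⟪g k, θ k - θstar⟫ := by
      have h1 := aux_convex_lb J hconv hdiff (θ k) θstar
      have e : ⟪g k, θstar - θ k⟫ = -⟪g k, θ k - θstar⟫ := by
        rw [← inner_neg_right]
        congr 1
        abel
      rw [e] at h1
      linarith
    have hAk := hA k
    have hmain : J (θ (k + 1)) - J θstar ≤ ⟪g k, θ k - θstar⟫ - α / 2 * ⟪g k, h k⟫ := by
      linarith
    have h2α : (0 : ℝ) < 2 * α := by linarith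
    rw [hexp, le_div_iff₀ h2α]
    have h4 := mul_le_mul_of_nonneg_right hmain h2α.le
    nlinarith [h4]
  have hind : ∀ k : ℕ, (k : ℝ) * (J (θ k) - J θstar) ≤ (D 0 - D k) / (2 * α) := by
    intro k
    induction k with
    | zero => simp
    | succ n ih =>
      have h1 := hB n
      have h2 := hmono n
      have h3 : (n : ℝ) * (J (θ (n + 1)) - J θstar) ≤ (n : ℝ) * (J (θ n) - J θstar) := by
        apply mul_le_mul_of_nonneg_left _ (Nat.cast_nonneg n)
        linarith
      rw [Nat.cast_succ]
      have hre : ((n : ℝ) + 1) * (J (θ (n + 1)) - J θstar)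
          = (n : ℝ) * (J (θ (n + 1)) - J θstar) + (J (θ (n + 1)) - J θstar) := by ring
      rw [hre]
      have hsum : (D 0 - D n) / (2 * α) + (D n - D (n + 1)) / (2 * α)
          = (D 0 - D (n + 1)) / (2 * α) := by
        rw [← add_div]
        congr 1
        ring
      calc (n : ℝ) * (J (θ (n + 1)) - J θstar) + (J (θ (n + 1)) - J θstar)
          ≤ (n : ℝ) * (J (θ n) - J θstar) + (J (θ (n + 1)) - J θstar) := by linarith
        _ ≤ (D 0 - D n) / (2 * α) + (D n - D (n + 1)) / (2 * α) := by linarith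
        _ = (D 0 - D (n + 1)) / (2 * α) := hsum
  intro k hk
  have hkpos : (0 : ℝ) < (k : ℝ) := by exact_mod_cast hk
  have h2α : (0 : ℝ) < 2 * α := by linarith
  have h1 := hind k
  have h2 : (D 0 - D k) / (2 * α) ≤ D 0 / (2 * α) := by
    gcongr
    linarith [hDnonneg k]
  have h3 : (k : ℝ) * (J (θ k) - J θstar) ≤ D 0 / (2 * α) := h1.trans h2
  rw [le_div_iff₀ h2α] at h3
  show J (θ k) - J θstar ≤ D 0 / (2 * α * k)
  rw [le_div_iff₀ (by positivity : (0 : ℝ) < 2 * α * k)]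
  nlinarith [h3]
end
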